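/- Let n ≥ 2, set m = n(n−1)/2, and work in the polynomial ring R = ℤ[a_1, …, a_m][X_1, …, X_n][t] with f(s) = 1 + Σ_{i=1}^{m} a_i s^i. Let G(t) = Σ_{σ ∈ S_n} sgn(σ) Π_{1≤i<j≤n} f(t(X_{σ(i)} − X_{σ(j)})). Let ω = (i_1, …, i_m) be a sequence of nonnegative integers with Σ_{l=1}^{m} l·i_l = m, and suppose i_k ≠ 0 for some k with k > 2n − 3. Then the coefficient of the monomial t^m · a_1^{i_1} ⋯ a_m^{i_m} in G(t) is the zero polynomial in X_1, …, X_n. (Equivalently, the characteristic number s_ω(U(n)/Tⁿ) of the flag manifold vanishes whenever ω has a nonzero entry in a position greater than 2n − 3.) -/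

import Mathlib

/-- The set of pairs `i < j` in `Fin n × Fin n`. -/
def flagPairs (n : ℕ) : Finset (Fin n × Fin n) :=
  Finset.univ.filter (fun p => p.1 < p.2)

/-- `f(t·d) = 1 + Σᵢ aᵢ dⁱ tⁱ` as an element of `ℤ[a₁,…,a_m][X₁,…,Xₙ][t]`, with the `aᵢ`
realized as the variables of the outer `MvPolynomial (Fin m)` and `d ∈ ℤ[X₁,…,Xₙ]`. -/
noncomputable def fFactor (n m : ℕ) (d : MvPolynomial (Fin n) ℤ) :
    Polynomial (MvPolynomial (Fin m) (MvPolynomial (Fin n) ℤ)) :=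
  1 + ∑ i : Fin m,
    Polynomial.C (MvPolynomial.X i * MvPolynomial.C (d ^ (i.1 + 1))) * Polynomial.X ^ (i.1 + 1)

open MvPolynomial

/-- A finset of naturals of cardinality `c` has sum at least `0+1+⋯+(c-1)`. -/
lemma sum_range_card_le (T : Finset ℕ) : ∑ i ∈ Finset.range T.card, i ≤ ∑ t ∈ T, t := by
  induction T using Finset.strongInduction with
  | _ T ih =>
    rcases T.eq_empty_or_nonempty with rfl | hT
    · simp
    · have hM : T.max' hT ∈ T := T.max'_mem hT
      have hsub : T ⊆ Finset.range (T.max' hT + 1) := fun x hx =>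
        Finset.mem_range.2 (Nat.lt_succ_of_le (T.le_max' x hx))
      have hcard : T.card ≤ T.max' hT + 1 := by simpa using Finset.card_le_card hsub
      have h2 := ih (T.erase (T.max' hT)) (Finset.erase_ssubset hM)
      rw [Finset.card_erase_of_mem hM] at h2
      have hpos : 1 ≤ T.card := Finset.card_pos.2 hT
      have hrange : ∑ i ∈ Finset.range T.card, i
          = (∑ i ∈ Finset.range (T.card - 1), i) + (T.card - 1) := by
        conv_lhs => rw [show T.card = (T.card - 1) + 1 by omega]
        rw [Finset.sum_range_succ]
      have hsum : ∑ t ∈ T, t = T.max' hT + ∑ t ∈ T.erase (T.max' hT), t :=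
        (Finset.add_sum_erase _ _ hM).symm
      omega

/-- For an injective `d : Fin n → ℕ` and distinct `p1 p2`, the values off `{p1,p2}` already
sum to at least `0+1+⋯+(n-3)`. -/
lemma inj_sum_bound {n : ℕ} (d : Fin n → ℕ) (hinj : Function.Injective d)
    (p1 p2 : Fin n) (hne : p1 ≠ p2) :
    d p1 + d p2 + ∑ i ∈ Finset.range (n - 2), i ≤ ∑ v, d v := by
  classical
  set S := (Finset.univ.erase p1).erase p2 with hS
  have hp2 : p2 ∈ Finset.univ.erase p1 := Finset.mem_erase.2 ⟨hne.symm, Finset.mem_univ _⟩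
  have h1 : ∑ v, d v = d p1 + ∑ v ∈ Finset.univ.erase p1, d v :=
    (Finset.add_sum_erase _ _ (Finset.mem_univ p1)).symm
  have h2 : ∑ v ∈ Finset.univ.erase p1, d v = d p2 + ∑ v ∈ S, d v :=
    (Finset.add_sum_erase _ _ hp2).symm
  have hcard : S.card = n - 2 := by
    rw [hS, Finset.card_erase_of_mem hp2, Finset.card_erase_of_mem (Finset.mem_univ p1)]
    simp only [Finset.card_univ, Fintype.card_fin]
    omega
  have himg : (S.image d).card = S.card := Finset.card_image_of_injective _ hinj
  have hsum : ∑ t ∈ S.image d, t = ∑ v ∈ S, d v :=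
    Finset.sum_image (fun x _ y _ h => hinj h)
  have hb := sum_range_card_le (S.image d)
  rw [himg, hcard] at hb
  omega

/-- Alternating sums of renamings of a monomial with a repeated exponent vanish. -/
lemma alt_monomial_eq_zero {n : ℕ} {R : Type*} [CommRing R] (d : Fin n →₀ ℕ) (c : R)
    (i0 j0 : Fin n) (hne : i0 ≠ j0) (hd : d i0 = d j0) :
    ∑ σ : Equiv.Perm (Fin n), (Equiv.Perm.sign σ : ℤ) •
      MvPolynomial.rename ⇑σ (MvPolynomial.monomial d c) = 0 := by
  have hmap : Finsupp.mapDomain (⇑(Equiv.swap i0 j0)) d = d := by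
    ext x
    have : x = Equiv.swap i0 j0 (Equiv.swap i0 j0 x) := (Equiv.swap_apply_self _ _ _).symm
    conv_lhs => rw [this]
    rw [Finsupp.mapDomain_apply (Equiv.injective _)]
    rcases eq_or_ne x i0 with rfl | hxi
    · rw [Equiv.swap_apply_left]; exact hd.symm
    rcases eq_or_ne x j0 with rfl | hxj
    · rw [Equiv.swap_apply_right]; exact hd
    · rw [Equiv.swap_apply_of_ne_of_ne hxi hxj]
  apply Finset.sum_involution (fun σ _ => σ * Equiv.swap i0 j0)
  · intro σ _
    have hre : MvPolynomial.rename ⇑(σ * Equiv.swap i0 j0) (MvPolynomial.monomial d c)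
        = MvPolynomial.rename ⇑σ (MvPolynomial.monomial d c) := by
      rw [Equiv.Perm.coe_mul, ← MvPolynomial.rename_rename, MvPolynomial.rename_monomial, hmap]
    rw [hre, Equiv.Perm.sign_mul, Equiv.Perm.sign_swap hne]
    push_cast
    rw [mul_neg_one, neg_smul, add_neg_cancel]
  · intro σ _ _ h
    have h1 : Equiv.swap i0 j0 = 1 :=
      mul_left_cancel (a := σ) (h.trans (mul_one σ).symm)
    have h2 : (Equiv.swap i0 j0) i0 = i0 := by rw [h1]; rfl
    rw [Equiv.swap_apply_left] at h2
    exact hne h2.symm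
  · intro σ _; exact Finset.mem_univ _
  · intro σ _
    rw [mul_assoc, Equiv.swap_mul_self, mul_one]

/-- Every monomial of `(X a - X b)^j` has total degree at most `j` and degree at least `j`
in the variables `a, b` together. -/
lemma pow_sub_support {n : ℕ} (a b : Fin n) (j : ℕ) (d : Fin n →₀ ℕ)
    (hd : d ∈ ((MvPolynomial.X a - MvPolynomial.X b : MvPolynomial (Fin n) ℤ) ^ j).support) :
    (∑ v, d v) ≤ j ∧ j ≤ d a + d b := by
  induction j generalizing d with
  | zero =>
    rw [pow_zero] at hd
    have : d = 0 := by
      rw [MvPolynomial.mem_support_iff, MvPolynomial.coeff_one] at hd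
      by_contra h
      simp [Ne.symm h] at hd
    subst this; simp
  | succ j ih =>
    rw [pow_succ] at hd
    have hdm := MvPolynomial.support_mul _ _ hd
    rw [Finset.mem_add] at hdm
    obtain ⟨d1, hd1, d2, hd2, rfl⟩ := hdm
    obtain ⟨h1, h2⟩ := ih d1 hd1
    have hd2' : d2 = Finsupp.single a 1 ∨ d2 = Finsupp.single b 1 := by
      have := MvPolynomial.support_sub _ _ _ hd2
      rw [Finset.mem_union, MvPolynomial.support_X, MvPolynomial.support_X] at this
      simpa using this
    have hs2 : (∑ v, d2 v) = 1 ∧ 1 ≤ d2 a + d2 b := by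
      rcases hd2' with rfl | rfl
      · constructor
        · simp [Finsupp.single_apply]
        · have : (Finsupp.single a 1 : Fin n →₀ ℕ) a = 1 := Finsupp.single_eq_same
          omega
      · constructor
        · simp [Finsupp.single_apply]
        · have : (Finsupp.single b 1 : Fin n →₀ ℕ) b = 1 := Finsupp.single_eq_same
          omega
    constructor
    · simp only [Finsupp.add_apply, Finset.sum_add_distrib]
      omega
    · simp only [Finsupp.add_apply]
      omega

/-- Support description for a single `fFactor` coefficient. -/
lemma fFactor_coeff_support (n m : ℕ) (a b : Fin n) (j : ℕ) (μ : Fin m →₀ ℕ) (d : Fin n →₀ ℕ)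
    (hd : d ∈ (MvPolynomial.coeff μ
      ((fFactor n m (MvPolynomial.X a - MvPolynomial.X b)).coeff j)).support) :
    (∑ v, d v) ≤ j ∧ ∀ k : Fin m, μ k ≠ 0 → k.1 + 1 ≤ d a + d b := by
  classical
  rw [fFactor, Polynomial.coeff_add, Polynomial.coeff_one, Polynomial.finset_sum_coeff] at hd
  simp only [Polynomial.coeff_C_mul_X_pow] at hd
  rcases Nat.eq_zero_or_pos j with rfl | hj
  · have hsum : (∑ i : Fin m, if 0 = i.1 + 1 then
        MvPolynomial.X i * MvPolynomial.C ((MvPolynomial.X a - MvPolynomial.X b) ^ (i.1 + 1))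
        else 0) = (0 : MvPolynomial (Fin m) (MvPolynomial (Fin n) ℤ)) := by
      apply Finset.sum_eq_zero
      intro i _
      rw [if_neg (by omega)]
    rw [hsum, if_pos rfl, add_zero] at hd
    rw [MvPolynomial.mem_support_iff, MvPolynomial.coeff_one] at hd
    by_cases hμ : (0 : Fin m →₀ ℕ) = μ
    · rw [if_pos hμ] at hd
      have hd0 : d = 0 := by
        by_contra h
        rw [MvPolynomial.coeff_one, if_neg (fun hh => h hh.symm)] at hd
        exact hd rfl
      subst hd0
      refine ⟨by simp, fun k hk => ?_⟩
      exact absurd (by rw [← hμ]; rfl) hk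
    · rw [if_neg hμ] at hd; simp at hd
  · rw [if_neg (by omega), zero_add] at hd
    by_cases hjm : j ≤ m
    · set i0 : Fin m := ⟨j - 1, by omega⟩ with hi0
      have hval : (i0 : ℕ) = j - 1 := rfl
      have hcol : (∑ i : Fin m, if j = i.1 + 1 then
          MvPolynomial.X i * MvPolynomial.C ((MvPolynomial.X a - MvPolynomial.X b) ^ (i.1 + 1))
          else (0 : MvPolynomial (Fin m) (MvPolynomial (Fin n) ℤ)))
          = MvPolynomial.X i0 * MvPolynomial.C ((MvPolynomial.X a - MvPolynomial.X b) ^ j) := by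
        rw [Finset.sum_eq_single i0]
        · rw [if_pos (by omega)]
          rw [show (i0 : ℕ) + 1 = j by omega]
        · intro i _ hne
          rw [if_neg]
          intro h
          apply hne
          apply Fin.ext
          omega
        · intro h; exact absurd (Finset.mem_univ _) h
      rw [hcol, mul_comm, MvPolynomial.C_mul_X_eq_monomial, MvPolynomial.coeff_monomial] at hd
      by_cases hμ : Finsupp.single i0 1 = μ
      · rw [if_pos hμ] at hd
        obtain ⟨hs, hab⟩ := pow_sub_support a b j d hd
        refine ⟨hs, fun k hk => ?_⟩
        rw [← hμ] at hk
        have : k = i0 := by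
          by_contra h
          rw [Finsupp.single_apply, if_neg (fun hh => h hh.symm)] at hk
          exact hk rfl
        subst this
        omega
      · rw [if_neg hμ] at hd; simp at hd
    · have hsum : (∑ i : Fin m, if j = i.1 + 1 then
          MvPolynomial.X i * MvPolynomial.C ((MvPolynomial.X a - MvPolynomial.X b) ^ (i.1 + 1))
          else 0) = (0 : MvPolynomial (Fin m) (MvPolynomial (Fin n) ℤ)) := by
        apply Finset.sum_eq_zero
        intro i _
        rw [if_neg]
        have := i.2
        omega
      rw [hsum] at hd; simp at hd

/-- Support description for the product of `fFactor`s over a set of pairs. -/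
lemma prod_fFactor_support (n m : ℕ) (S : Finset (Fin n × Fin n)) (j : ℕ) (μ : Fin m →₀ ℕ)
    (d : Fin n →₀ ℕ)
    (hd : d ∈ (MvPolynomial.coeff μ
        ((∏ p ∈ S, fFactor n m (MvPolynomial.X p.1 - MvPolynomial.X p.2)).coeff j)).support) :
    (∑ v, d v) ≤ j ∧ ∀ k : Fin m, μ k ≠ 0 → ∃ p ∈ S, k.1 + 1 ≤ d p.1 + d p.2 := by
  classical
  induction S using Finset.induction generalizing j μ d with
  | empty =>
    rw [Finset.prod_empty, Polynomial.coeff_one] at hd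
    rcases Nat.eq_zero_or_pos j with rfl | hj
    · rw [if_pos rfl, MvPolynomial.mem_support_iff, MvPolynomial.coeff_one] at hd
      by_cases hμ : (0 : Fin m →₀ ℕ) = μ
      · rw [if_pos hμ] at hd
        have hd0 : d = 0 := by
          by_contra h
          rw [MvPolynomial.coeff_one, if_neg (fun hh => h hh.symm)] at hd
          exact hd rfl
        subst hd0
        refine ⟨by simp, fun k hk => absurd (by rw [← hμ]; rfl) hk⟩
      · rw [if_neg hμ] at hd; simp at hd
    · rw [if_neg (by omega)] at hd; simp at hd
  | @insert p S hp ih =>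
    rw [Finset.prod_insert hp, Polynomial.coeff_mul] at hd
    rw [MvPolynomial.mem_support_iff, MvPolynomial.coeff_sum] at hd
    rw [MvPolynomial.coeff_sum] at hd
    obtain ⟨x, hx, hne0⟩ := Finset.exists_ne_zero_of_sum_ne_zero hd
    rw [MvPolynomial.coeff_mul] at hne0
    obtain ⟨c, hc, hne1⟩ := Finset.exists_ne_zero_of_sum_ne_zero
      (by rwa [MvPolynomial.coeff_sum] at hne0)
    have hdm := MvPolynomial.support_mul _ _ (MvPolynomial.mem_support_iff.2 hne1)
    rw [Finset.mem_add] at hdm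
    obtain ⟨d1, hd1, d2, hd2, hdd⟩ := hdm
    rw [Finset.HasAntidiagonal.mem_antidiagonal] at hx
    rw [Finset.HasAntidiagonal.mem_antidiagonal] at hc
    obtain ⟨hA1, hA2⟩ := fFactor_coeff_support n m p.1 p.2 x.1 c.1 d1 hd1
    obtain ⟨hB1, hB2⟩ := ih x.2 c.2 d2 hd2
    subst hdd
    constructor
    · simp only [Finsupp.add_apply, Finset.sum_add_distrib]
      omega
    · intro k hk
      have hck : c.1 k ≠ 0 ∨ c.2 k ≠ 0 := by
        by_contra h
        push_neg at h
        apply hk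
        rw [← hc]
        simp [h.1, h.2]
      rcases hck with h | h
      · refine ⟨p, Finset.mem_insert_self _ _, ?_⟩
        have := hA2 k h
        simp only [Finsupp.add_apply]
        omega
      · obtain ⟨q, hq, hqle⟩ := hB2 k h
        refine ⟨q, Finset.mem_insert_of_mem hq, ?_⟩
        simp only [Finsupp.add_apply]
        omega

/-- `fFactor` commutes with renaming the `X` variables. -/
lemma fFactor_map (n m : ℕ) (g : MvPolynomial (Fin n) ℤ →+* MvPolynomial (Fin n) ℤ)
    (d : MvPolynomial (Fin n) ℤ) :
    Polynomial.map (MvPolynomial.map g) (fFactor n m d) = fFactor n m (g d) := by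
  simp [fFactor, Polynomial.map_add, Polynomial.map_one, Polynomial.map_sum, Polynomial.map_mul,
    Polynomial.map_pow, Polynomial.map_C, Polynomial.map_X, MvPolynomial.map_X,
    MvPolynomial.map_C, map_pow, map_mul]

lemma main_aux (n m : ℕ) (hn : 2 ≤ n) (hm : m = n * (n - 1) / 2)
    (μ : Fin m →₀ ℕ) (k : Fin m) (hk : μ k ≠ 0) (hk' : 2 * n - 3 < k.1 + 1) :
    MvPolynomial.coeff μ
      ((∑ σ : Equiv.Perm (Fin n),
          (Equiv.Perm.sign σ : ℤ) •
            ∏ p ∈ flagPairs n,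
              fFactor n m
                (MvPolynomial.X (σ p.1) - MvPolynomial.X (σ p.2))).coeff m) = 0 := by
  classical
  have hmap : ∀ σ : Equiv.Perm (Fin n),
      (∏ p ∈ flagPairs n, fFactor n m (MvPolynomial.X (σ p.1) - MvPolynomial.X (σ p.2)))
      = Polynomial.map (MvPolynomial.map (MvPolynomial.rename ⇑σ).toRingHom)
          (∏ p ∈ flagPairs n, fFactor n m (MvPolynomial.X p.1 - MvPolynomial.X p.2)) := by
    intro σ
    rw [← Polynomial.coe_mapRingHom, map_prod]
    refine Finset.prod_congr rfl fun p _ => ?_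
    rw [Polynomial.coe_mapRingHom, fFactor_map]
    simp
  rw [Polynomial.finset_sum_coeff, MvPolynomial.coeff_sum]
  simp only [Polynomial.coeff_smul, MvPolynomial.coeff_smul, hmap, Polynomial.coeff_map,
    MvPolynomial.coeff_map]
  set Q : MvPolynomial (Fin n) ℤ :=
    MvPolynomial.coeff μ
      ((∏ p ∈ flagPairs n, fFactor n m (MvPolynomial.X p.1 - MvPolynomial.X p.2)).coeff m)
    with hQdef
  have hQ : Q = ∑ d ∈ Q.support, MvPolynomial.monomial d (MvPolynomial.coeff d Q) :=
    (MvPolynomial.support_sum_monomial_coeff Q).symm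
  have step1 : (∑ σ : Equiv.Perm (Fin n), (Equiv.Perm.sign σ : ℤ) •
          (MvPolynomial.rename ⇑σ).toRingHom Q)
      = ∑ σ : Equiv.Perm (Fin n), ∑ d ∈ Q.support, (Equiv.Perm.sign σ : ℤ) •
          MvPolynomial.rename ⇑σ (MvPolynomial.monomial d (MvPolynomial.coeff d Q)) := by
    refine Finset.sum_congr rfl fun σ _ => ?_
    conv_lhs => rw [hQ]
    rw [map_sum, Finset.smul_sum]
    rfl
  rw [step1, Finset.sum_comm]
  refine Finset.sum_eq_zero fun d hd => ?_
  obtain ⟨hsum, hpair⟩ := prod_fFactor_support n m (flagPairs n) m μ d hd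
  obtain ⟨p, hpmem, hple⟩ := hpair k hk
  have hplt : p.1 < p.2 := (Finset.mem_filter.1 hpmem).2
  by_cases hinj : Function.Injective ⇑d
  · exfalso
    have hbd := inj_sum_bound ⇑d hinj p.1 p.2 (ne_of_lt hplt)
    have hMeq : m = (∑ i ∈ Finset.range (n - 2), i) + (n - 2) + (n - 1) := by
      rw [hm, ← Finset.sum_range_id]
      obtain ⟨r, rfl⟩ : ∃ r, n = r + 2 := ⟨n - 2, by omega⟩
      rw [show r + 2 - 2 = r from rfl]
      rw [show r + 2 = (r + 1) + 1 from rfl, Finset.sum_range_succ, Finset.sum_range_succ]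
      omega
    omega
  · rw [Function.not_injective_iff] at hinj
    obtain ⟨i, j, hij, hne⟩ := hinj
    exact alt_monomial_eq_zero d _ i j hne hij

theorem s_omega_flag_vanishes_high_position (n : ℕ) (hn : 2 ≤ n)
    (ω : Fin (n * (n - 1) / 2) → ℕ)
    (hω : ∑ l : Fin (n * (n - 1) / 2), (l.1 + 1) * ω l = n * (n - 1) / 2)
    (k : Fin (n * (n - 1) / 2)) (hk : ω k ≠ 0) (hk' : 2 * n - 3 < k.1 + 1) :
    MvPolynomial.coeff (Finsupp.equivFunOnFinite.symm ω)
      ((∑ σ : Equiv.Perm (Fin n),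
          (Equiv.Perm.sign σ : ℤ) •
            ∏ p ∈ flagPairs n,
              fFactor n (n * (n - 1) / 2)
                (MvPolynomial.X (σ p.1) - MvPolynomial.X (σ p.2))).coeff
        (n * (n - 1) / 2)) = 0 := by
  exact main_aux n (n * (n - 1) / 2) hn rfl (Finsupp.equivFunOnFinite.symm ω) k
    (by simpa using hk) hk'
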